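/- Let p > 1 and let a, b be positive reals. Then ∫₀^{2π} [ (a + b cos θ)/a − (b + a cos θ)/b ] (a² + 2ab cos θ + b²)^{(p−1)/2} dθ = (p−1)(b² − a²) ∫₀^{2π} sin²θ · (a² + 2ab cos θ + b²)^{(p−3)/2} dθ. -/

import Mathlib

open Real in
theorem stmt_5 (p a b : ℝ) (hp : 1 < p) (ha : 0 < a) (hb : 0 < b) :
    ∫ θ in (0 : ℝ)..(2 * π),
        ((a + b * Real.cos θ) / a - (b + a * Real.cos θ) / b) *
          (a ^ 2 + 2 * a * b * Real.cos θ + b ^ 2) ^ ((p - 1) / 2) =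
      (p - 1) * (b ^ 2 - a ^ 2) *
        ∫ θ in (0 : ℝ)..(2 * π),
          Real.sin θ ^ 2 * (a ^ 2 + 2 * a * b * Real.cos θ + b ^ 2) ^ ((p - 3) / 2) := by
  rcases eq_or_ne a b with hab | hab
  · subst hab
    simp
  · set Q : ℝ → ℝ := fun θ => a ^ 2 + 2 * a * b * Real.cos θ + b ^ 2 with hQdef
    have hQpos : ∀ θ, 0 < Q θ := by
      intro θ
      have h0 : a - b ≠ 0 := sub_ne_zero.mpr hab
      have h1 : 0 < (a - b) ^ 2 := by positivity
      have h2 : -1 ≤ Real.cos θ := Real.neg_one_le_cos θ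
      have h3 : 0 < a * b := mul_pos ha hb
      simp only [hQdef]
      nlinarith
    have hQcont : Continuous Q := by fun_prop
    have hF : ∀ θ : ℝ, HasDerivAt (fun t => Real.sin t * (Q t) ^ ((p - 1) / 2))
        (Real.cos θ * (Q θ) ^ ((p - 1) / 2)
          - (p - 1) * a * b * (Real.sin θ ^ 2 * (Q θ) ^ ((p - 3) / 2))) θ := by
      intro θ
      have h1 : HasDerivAt Q (2 * a * b * (-Real.sin θ)) θ := by
        have := (((Real.hasDerivAt_cos θ).const_mul (2 * a * b)).const_add (a ^ 2)).add_const
          (b ^ 2)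
        simpa [hQdef] using this
      have h2 : HasDerivAt (fun t => (Q t) ^ ((p - 1) / 2))
          (2 * a * b * (-Real.sin θ) * ((p - 1) / 2) * (Q θ) ^ ((p - 1) / 2 - 1)) θ :=
        h1.rpow_const (Or.inl (ne_of_gt (hQpos θ)))
      have h3 := (Real.hasDerivAt_sin θ).mul h2
      refine h3.congr_deriv ?_
      rw [show (p - 1) / 2 - 1 = (p - 3) / 2 by ring]
      ring
    have hcont1 : Continuous fun θ => Real.cos θ * (Q θ) ^ ((p - 1) / 2) :=
      Real.continuous_cos.mul (hQcont.rpow_const fun x => Or.inl (ne_of_gt (hQpos x)))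
    have hcont2 : Continuous fun θ => Real.sin θ ^ 2 * (Q θ) ^ ((p - 3) / 2) :=
      (Real.continuous_sin.pow 2).mul (hQcont.rpow_const fun x => Or.inl (ne_of_gt (hQpos x)))
    have hint1 : IntervalIntegrable (fun θ => Real.cos θ * (Q θ) ^ ((p - 1) / 2))
        MeasureTheory.volume 0 (2 * π) := hcont1.intervalIntegrable _ _
    have hint2 : IntervalIntegrable (fun θ => Real.sin θ ^ 2 * (Q θ) ^ ((p - 3) / 2))
        MeasureTheory.volume 0 (2 * π) := hcont2.intervalIntegrable _ _
    have key : (∫ θ in (0:ℝ)..(2*π), (Real.cos θ * (Q θ) ^ ((p - 1) / 2)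
        - (p - 1) * a * b * (Real.sin θ ^ 2 * (Q θ) ^ ((p - 3) / 2)))) = 0 := by
      rw [intervalIntegral.integral_eq_sub_of_hasDerivAt (fun θ _ => hF θ)
        ((hcont1.sub (((continuous_const).mul hcont2 : Continuous _))).intervalIntegrable _ _)]
      simp [Real.sin_two_pi]
    rw [intervalIntegral.integral_sub hint1 (hint2.const_mul _),
      intervalIntegral.integral_const_mul, sub_eq_zero] at key
    have hL : ∀ θ : ℝ, ((a + b * Real.cos θ) / a - (b + a * Real.cos θ) / b) * (Q θ) ^ ((p - 1) / 2)
        = (b ^ 2 - a ^ 2) / (a * b) * (Real.cos θ * (Q θ) ^ ((p - 1) / 2)) := by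
      intro θ
      field_simp
      ring
    calc (∫ θ in (0:ℝ)..(2*π), ((a + b * Real.cos θ) / a - (b + a * Real.cos θ) / b) * (Q θ) ^ ((p - 1) / 2))
        = ∫ θ in (0:ℝ)..(2*π), (b ^ 2 - a ^ 2) / (a * b) * (Real.cos θ * (Q θ) ^ ((p - 1) / 2)) := by
          simp_rw [hL]
      _ = (b ^ 2 - a ^ 2) / (a * b) * ∫ θ in (0:ℝ)..(2*π), Real.cos θ * (Q θ) ^ ((p - 1) / 2) := by
          rw [intervalIntegral.integral_const_mul]
      _ = (b ^ 2 - a ^ 2) / (a * b) * ((p - 1) * a * b * ∫ θ in (0:ℝ)..(2*π), Real.sin θ ^ 2 * (Q θ) ^ ((p - 3) / 2)) := by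
          rw [key]
      _ = (p - 1) * (b ^ 2 - a ^ 2) * ∫ θ in (0:ℝ)..(2*π), Real.sin θ ^ 2 * (Q θ) ^ ((p - 3) / 2) := by
          field_simp
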